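/- For each n ∈ ω, define the frame H_n = ⟨W_n, E_n⟩ where C_n = {k : k ≤ n+1}, B_n = {X ⊆ C_n : |X| = 2}, W_n = {a} ∪ B_n ∪ C_n, and E_n = {(a,u) : u ∈ B_n ∪ C_n} ∪ {(b,c) ∈ B_n × C_n : c ∈ b}. Then for all k < n, the frame H_n is not reducible to the frame H_k. -/

import Mathlib

/-- A Kripke frame: a set of worlds with a binary relation. -/
structure Frame where
  World : Type
  rel : World → World → Prop

/-- `f` is a reduction (surjective p-morphism) of `F` to `G`. -/
def Reduction (F G : Frame) (f : F.World → G.World) : Prop :=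
  Function.Surjective f ∧
  (∀ w u, F.rel w u → G.rel (f w) (f u)) ∧
  (∀ w v, G.rel (f w) v → ∃ u, F.rel w u ∧ f u = v)

/-- `F` is reducible to `G`. -/
def Reducible (F G : Frame) : Prop := ∃ f, Reduction F G f

/-- The subframe of `F` generated by the point `w`. -/
def Frame.genSub (F : Frame) (w : F.World) : Frame :=
  ⟨{v // Relation.ReflTransGen F.rel w v}, fun a b => F.rel a.1 b.1⟩

/-- The worlds of the frame `H n`: the root `a` (encoded `none`), the
two-element subsets of `C n = {0, …, n+1}` (the set `B n`), and the elements of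
`C n` itself. -/
def HWorld (n : ℕ) : Type := Option (({s : Finset (Fin (n + 2)) // s.card = 2}) ⊕ Fin (n + 2))

/-- The relation of the frame `H n`: the root sees everything else, and a
two-element set `b ∈ B n` sees exactly its two elements. -/
def Hrel (n : ℕ) : HWorld n → HWorld n → Prop := fun x y =>
  match x, y with
  | none, some _ => True
  | some (Sum.inl b), some (Sum.inr c) => c ∈ b.1
  | _, _ => False

/-- The frame `H n`. -/
def HFrame (n : ℕ) : Frame := ⟨HWorld n, Hrel n⟩

/-- For `k < n`, the frame `H n` is not reducible to the frame `H k`. -/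
lemma no_succ_inr (n : ℕ) (c : Fin (n+2)) (u : HWorld n) :
    ¬ Hrel n (some (Sum.inr c)) u := by
  cases u with
  | none => exact fun h => h
  | some s => cases s with
    | inl b => exact fun h => h
    | inr c' => exact fun h => h

theorem hframe_not_reducible : ∀ n k : ℕ, k < n → ¬ Reducible (HFrame n) (HFrame k) := by
  rintro n k hk ⟨f, _, hforth, hback⟩
  -- Step 1: points of C_n map to points of C_k
  have hC : ∀ c : Fin (n+2), ∃ c' : Fin (k+2),
      f (some (Sum.inr c)) = some (Sum.inr c') := by
    intro c
    rcases h : f (some (Sum.inr c)) with _ | b | c'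
    · exfalso
      have hr : Hrel k (f (some (Sum.inr c))) (some (Sum.inr 0)) := by rw [h]; trivial
      obtain ⟨u, hu, _⟩ := hback _ _ hr
      exact no_succ_inr n c u hu
    · exfalso
      obtain ⟨m, hm⟩ := Finset.card_pos.mp (by rw [b.2]; norm_num)
      have hr : Hrel k (f (some (Sum.inr c))) (some (Sum.inr m)) := by rw [h]; exact hm
      obtain ⟨u, hu, _⟩ := hback _ _ hr
      exact no_succ_inr n c u hu
    · exact ⟨c', rfl⟩
  choose g hg using hC
  -- Step 2: g is injective
  have hginj : Function.Injective g := by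
    intro c₁ c₂ heq
    by_contra hne
    set b : {s : Finset (Fin (n + 2)) // s.card = 2} :=
      ⟨{c₁, c₂}, Finset.card_pair hne⟩ with hb
    have hbc₁ : Hrel n (some (Sum.inl b)) (some (Sum.inr c₁)) := by
      show c₁ ∈ ({c₁, c₂} : Finset (Fin (n+2)))
      simp
    rcases h : f (some (Sum.inl b)) with _ | b' | d'
    · -- f(b) = root : impossible
      have b'' : {s : Finset (Fin (k + 2)) // s.card = 2} :=
        ⟨{0, 1}, Finset.card_pair (Fin.ne_of_val_ne (by simp))⟩
      have hr : Hrel k (f (some (Sum.inl b))) (some (Sum.inl b'')) := by rw [h]; trivial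
      obtain ⟨u, hu, hfu⟩ := hback _ _ hr
      cases u with
      | none => exact hu
      | some s => cases s with
        | inl bb => exact hu
        | inr c =>
          rw [hg c] at hfu
          cases hfu
    · -- f(b) ∈ B_k
      have hm₁ : Hrel k (f (some (Sum.inl b))) (f (some (Sum.inr c₁))) := hforth _ _ hbc₁
      rw [h, hg c₁] at hm₁
      have hd₁ : g c₁ ∈ b'.1 := hm₁
      obtain ⟨e, he, hed⟩ := Finset.exists_mem_ne (by rw [b'.2]; norm_num) (g c₁)
      have hr : Hrel k (f (some (Sum.inl b))) (some (Sum.inr e)) := by rw [h]; exact he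
      obtain ⟨u, hu, hfu⟩ := hback _ _ hr
      cases u with
      | none => exact hu
      | some s => cases s with
        | inl bb => exact hu
        | inr c =>
          have hcb : c ∈ ({c₁, c₂} : Finset (Fin (n+2))) := hu
          rw [hg c] at hfu
          have : g c = e := by
            exact Option.some_injective _ hfu |> Sum.inr_injective
          rcases Finset.mem_insert.mp hcb with rfl | hcb2
          · exact hed (heq ▸ this.symm) |>.elim
          · have : c = c₂ := Finset.mem_singleton.mp hcb2
            subst this
            exact hed (heq ▸ (Option.some_injective _ hfu |> Sum.inr_injective).symm)
              |>.elim
    · -- f(b) ∈ C_k : impossible, b has successors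
      have hm₁ : Hrel k (f (some (Sum.inl b))) (f (some (Sum.inr c₁))) := hforth _ _ hbc₁
      rw [h, hg c₁] at hm₁
      exact hm₁
  have hle := Fintype.card_le_of_injective g hginj
  simp only [Fintype.card_fin] at hle
  omega
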